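/- For nonzero Laurent polynomials P, Q over an integral domain, the Newton polytope of the product equals the Minkowski sum of the Newton polytopes: Δ(PQ) = Δ(P) + Δ(Q). -/

import Mathlib

open Pointwise

/-- The Newton polytope of a Laurent polynomial in `n` variables (an element of the
monoid algebra of `Fin n →₀ ℤ`): the convex hull in `ℝⁿ` of its support. -/
noncomputable def newtonPolytope {R : Type*} [CommRing R] {n : ℕ}
    (P : AddMonoidAlgebra R (Fin n →₀ ℤ)) : Set (Fin n → ℝ) :=
  convexHull ℝ ((fun k : Fin n →₀ ℤ => fun i => (k i : ℝ)) '' ↑P.coeff.support)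

/-- For nonzero Laurent polynomials `P`, `Q` over an integral domain,
the Newton polytope of the product is the Minkowski sum of the Newton polytopes:
`Δ(PQ) = Δ(P) + Δ(Q)`. -/
theorem newtonPolytope_mul
    (R : Type*) [CommRing R] [IsDomain R] (n : ℕ)
    (P Q : AddMonoidAlgebra R (Fin n →₀ ℤ)) (hP : P ≠ 0) (hQ : Q ≠ 0) :
    newtonPolytope (P * Q) = newtonPolytope P + newtonPolytope Q := by
  classical
  simp only [newtonPolytope]
  set f : (Fin n →₀ ℤ) → (Fin n → ℝ) := fun k : Fin n →₀ ℤ => fun i => (k i : ℝ) with hf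
  have hfadd : ∀ a b : Fin n →₀ ℤ, f (a + b) = f a + f b := by
    intro a b; funext i; simp [hf]
  have hfinj : Function.Injective f := by
    intro a b hab
    ext i
    have := congrFun hab i
    simp only [hf] at this
    exact_mod_cast this
  set A : Set (Fin n → ℝ) := f '' ↑P.coeff.support with hA'
  set B : Set (Fin n → ℝ) := f '' ↑Q.coeff.support with hB'
  have hA : A.Finite := P.coeff.support.finite_toSet.image f
  have hB : B.Finite := Q.coeff.support.finite_toSet.image f
  have hABfin : (A + B).Finite := hA.add hB
  rw [← convexHull_add]
  -- the key uniqueness of decomposition at extreme points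
  have key : ∀ v ∈ (convexHull ℝ (A + B)).extremePoints ℝ,
      ∃ a ∈ P.coeff.support, ∃ b ∈ Q.coeff.support, v = f (a + b) ∧
        ∀ a' ∈ P.coeff.support, ∀ b' ∈ Q.coeff.support, a' + b' = a + b → a' = a ∧ b' = b := by
    intro v hv
    have hvAB : v ∈ A + B := extremePoints_convexHull_subset hv
    obtain ⟨x, hx, y, hy, hxy⟩ := Set.mem_add.1 hvAB
    obtain ⟨a, ha, rfl⟩ := hx
    obtain ⟨b, hb, rfl⟩ := hy
    refine ⟨a, ha, b, hb, by rw [hfadd]; exact hxy.symm, ?_⟩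
    intro a' ha' b' hb' hsum
    have h1 : f a' + f b ∈ convexHull ℝ (A + B) :=
      subset_convexHull ℝ _ (Set.add_mem_add ⟨a', ha', rfl⟩ ⟨b, hb, rfl⟩)
    have h2 : f a + f b' ∈ convexHull ℝ (A + B) :=
      subset_convexHull ℝ _ (Set.add_mem_add ⟨a, ha, rfl⟩ ⟨b', hb', rfl⟩)
    have hsum' : f a' + f b' = f a + f b := by rw [← hfadd, ← hfadd, hsum]
    have hmid : v ∈ openSegment ℝ (f a' + f b) (f a + f b') := by
      refine ⟨1/2, 1/2, by norm_num, by norm_num, by norm_num, ?_⟩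
      rw [← hxy]
      funext i
      have := congrFun hsum' i
      simp only [Pi.add_apply, Pi.smul_apply, smul_eq_mul] at this ⊢
      linarith
    obtain ⟨e1, e2⟩ := (mem_extremePoints.1 hv).2 _ h1 _ h2 hmid
    rw [← hxy] at e1 e2
    have ha'a : a' = a := by
      apply hfinj
      exact add_right_cancel e1
    have hb'b : b' = b := by
      apply hfinj
      exact add_left_cancel e2
    exact ⟨ha'a, hb'b⟩
  apply Set.Subset.antisymm
  · -- easy direction
    apply convexHull_mono
    rintro _ ⟨k, hk, rfl⟩
    have hk' := AddMonoidAlgebra.support_coeff_mul_subset P Q hk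
    rw [Finset.mem_add] at hk'
    obtain ⟨a, ha, b, hb, rfl⟩ := hk'
    rw [hfadd]
    exact Set.add_mem_add ⟨a, ha, rfl⟩ ⟨b, hb, rfl⟩
  · -- hard direction
    have hcompact : IsCompact (convexHull ℝ (A + B)) := hABfin.isCompact_convexHull ℝ
    have hclosed : IsClosed (convexHull ℝ (f '' ↑(P * Q).coeff.support)) :=
      ((P * Q).coeff.support.finite_toSet.image f).isCompact_convexHull ℝ |>.isClosed
    rw [← closure_convexHull_extremePoints hcompact (convex_convexHull ℝ _)]
    refine closure_minimal (convexHull_min ?_ (convex_convexHull ℝ _)) hclosed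
    intro v hv
    obtain ⟨a, ha, b, hb, rfl, huniq⟩ := key v hv
    apply subset_convexHull
    refine ⟨a + b, ?_, rfl⟩
    rw [Finset.mem_coe, Finsupp.mem_support_iff]
    have hcoef : (P * Q).coeff (a + b) = P.coeff a * Q.coeff b := by
      rw [AddMonoidAlgebra.coeff_mul]
      simp only [Finsupp.sum]
      rw [Finset.sum_eq_single a]
      · rw [Finset.sum_eq_single b]
        · simp
        · intro b' hb' hne
          have hno : ¬(a + b' = a + b) := fun hc => hne ((huniq a ha b' hb' hc).2)
          simp [hno]
        · intro hb'
          exact absurd hb hb'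
      · intro a' ha' hne
        apply Finset.sum_eq_zero
        intro b' hb'
        have hno : ¬(a' + b' = a + b) := fun hc => hne ((huniq a' ha' b' hb' hc).1)
        simp [hno]
      · intro ha'
        exact absurd ha ha'
    rw [hcoef]
    exact mul_ne_zero (Finsupp.mem_support_iff.1 ha) (Finsupp.mem_support_iff.1 hb)
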